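/- Let g(x) = ∏_{i=1}^d x_i^{n_i} be a monic monomial of total degree 2r, and let C_1,…,C_r be symmetric positive definite d×d matrices each satisfying ‖C_s‖ < 1/δ and ‖C_s⁻¹‖ < 1/δ, where 0 < δ < 1. Then f(x) = g(x)/∏_{s=1}^r (1 + xᵀC_s x) satisfies sup_{x∈ℝ^d} |f(x)| ≥ (δ/d)^r. -/

import Mathlib

open Matrix

lemma psd_cs {d : ℕ} {A : Matrix (Fin d) (Fin d) ℝ} (hA : A.PosSemidef) (x y : Fin d → ℝ) :
    (x ⬝ᵥ A.mulVec y) ^ 2 ≤ (x ⬝ᵥ A.mulVec x) * (y ⬝ᵥ A.mulVec y) := by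
  have hsymm : y ⬝ᵥ A.mulVec x = x ⬝ᵥ A.mulVec y := by
    have hT : Aᵀ = A := by
      have h := hA.1
      simpa [Matrix.IsHermitian] using h
    rw [Matrix.dotProduct_mulVec, ← Matrix.mulVec_transpose, hT, dotProduct_comm]
  have hq : ∀ t : ℝ, 0 ≤ (y ⬝ᵥ A.mulVec y) * (t * t) + (2 * (x ⬝ᵥ A.mulVec y)) * t
      + (x ⬝ᵥ A.mulVec x) := by
    intro t
    have h := hA.dotProduct_mulVec_nonneg (x + t • y)
    simp only [star_trivial, Matrix.mulVec_add, Matrix.mulVec_smul, add_dotProduct,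
      dotProduct_add, smul_dotProduct, dotProduct_smul, smul_eq_mul] at h
    rw [hsymm] at h
    linarith
  have hd := discrim_le_zero hq
  rw [discrim] at hd
  nlinarith [hd]

lemma quad_le {d : ℕ} (A : Matrix (Fin d) (Fin d) ℝ) (x : Fin d → ℝ) :
    x ⬝ᵥ A.mulVec x ≤ ‖toEuclideanCLM (𝕜 := ℝ) A‖ * (x ⬝ᵥ x) := by
  set u : EuclideanSpace ℝ (Fin d) := (WithLp.equiv 2 (Fin d → ℝ)).symm x with hu
  have h1 : x ⬝ᵥ A.mulVec x = inner ℝ u (toEuclideanCLM (𝕜 := ℝ) A u) := by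
    rw [inner_toEuclideanCLM]; rfl
  have h2 : x ⬝ᵥ x = (‖u‖ : ℝ) ^ 2 := by
    rw [← real_inner_self_eq_norm_sq]
    show x ⬝ᵥ x = x ⬝ᵥ star x
    simp
  rw [h1, h2]
  calc inner ℝ u (toEuclideanCLM (𝕜 := ℝ) A u)
      ≤ ‖u‖ * ‖toEuclideanCLM (𝕜 := ℝ) A u‖ := real_inner_le_norm _ _
    _ ≤ ‖u‖ * (‖toEuclideanCLM (𝕜 := ℝ) A‖ * ‖u‖) := by
        gcongr
        exact (toEuclideanCLM (𝕜 := ℝ) A).le_opNorm u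
    _ = ‖toEuclideanCLM (𝕜 := ℝ) A‖ * ‖u‖ ^ 2 := by ring


lemma quad_ge {d : ℕ} {A : Matrix (Fin d) (Fin d) ℝ} (hA : A.PosDef) {δ : ℝ} (hδ : 0 < δ)
    (h : ‖toEuclideanCLM (𝕜 := ℝ) A⁻¹‖ ≤ 1 / δ) (x : Fin d → ℝ) :
    δ * (x ⬝ᵥ x) ≤ x ⬝ᵥ A.mulVec x := by
  have hAinv : (A⁻¹).PosDef := hA.inv
  have hdet : IsUnit A.det := isUnit_iff_ne_zero.2 (ne_of_gt hA.det_pos)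
  have hinv : A⁻¹ * A = 1 := nonsing_inv_mul A hdet
  have hxx : 0 ≤ x ⬝ᵥ x := Finset.sum_nonneg fun i _ => mul_self_nonneg _
  have hq : 0 ≤ x ⬝ᵥ A.mulVec x := by
    have := hA.posSemidef.dotProduct_mulVec_nonneg x; simpa using this
  have e1 : x ⬝ᵥ (A⁻¹).mulVec (A.mulVec x) = x ⬝ᵥ x := by
    rw [Matrix.mulVec_mulVec, hinv, Matrix.one_mulVec]
  have e2 : (A.mulVec x) ⬝ᵥ (A⁻¹).mulVec (A.mulVec x) = x ⬝ᵥ A.mulVec x := by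
    rw [Matrix.mulVec_mulVec, hinv, Matrix.one_mulVec, dotProduct_comm]
  have cs := psd_cs hAinv.posSemidef x (A.mulVec x)
  rw [e1, e2] at cs
  have q1 : x ⬝ᵥ (A⁻¹).mulVec x ≤ (1 / δ) * (x ⬝ᵥ x) :=
    (quad_le A⁻¹ x).trans (mul_le_mul_of_nonneg_right h hxx)
  have cs2 : (x ⬝ᵥ x) ^ 2 ≤ (1 / δ) * (x ⬝ᵥ x) * (x ⬝ᵥ A.mulVec x) :=
    cs.trans (mul_le_mul_of_nonneg_right q1 hq)
  rcases hxx.eq_or_lt with h0 | h0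
  · rw [← h0]; simpa using hq
  · have := mul_le_mul_of_nonneg_left cs2 hδ.le
    have hδδ : δ * (1 / δ) = 1 := mul_one_div_cancel (ne_of_gt hδ)
    have expand : δ * (1 / δ * (x ⬝ᵥ x) * (x ⬝ᵥ A.mulVec x)) = (x ⬝ᵥ x) * (x ⬝ᵥ A.mulVec x) := by
      field_simp
    have h3 : δ * (x ⬝ᵥ x) ^ 2 ≤ (x ⬝ᵥ x) * (x ⬝ᵥ A.mulVec x) := by
      calc δ * (x ⬝ᵥ x) ^ 2 ≤ δ * (1 / δ * (x ⬝ᵥ x) * (x ⬝ᵥ A.mulVec x)) := this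
        _ = _ := expand
    have := (mul_le_mul_iff_right₀ h0).1 (by nlinarith : (x ⬝ᵥ x) * (δ * (x ⬝ᵥ x)) ≤ (x ⬝ᵥ x) * (x ⬝ᵥ A.mulVec x))
    exact this


lemma f_ub {d r : ℕ} {δ : ℝ} (hδ0 : 0 < δ) (n : Fin d → ℕ) (hn : ∑ i, n i = 2 * r)
    (C : Fin r → Matrix (Fin d) (Fin d) ℝ) (hC : ∀ s, (C s).PosDef)
    (hCin : ∀ s, ‖toEuclideanCLM (𝕜 := ℝ) (C s)⁻¹‖ ≤ 1 / δ) (x : Fin d → ℝ) :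
    |(∏ i, x i ^ n i) / ∏ s, (1 + x ⬝ᵥ (C s).mulVec x)| ≤ (1 / δ) ^ r := by
  have hxx : 0 ≤ x ⬝ᵥ x := Finset.sum_nonneg fun i _ => mul_self_nonneg _
  have hQ : ∀ s, δ * (x ⬝ᵥ x) ≤ x ⬝ᵥ (C s).mulVec x :=
    fun s => quad_ge (hC s) hδ0 (hCin s) x
  have hQ0 : ∀ s, 0 ≤ x ⬝ᵥ (C s).mulVec x := fun s => by
    have := (hC s).posSemidef.dotProduct_mulVec_nonneg x; simpa using this
  have hfac_pos : ∀ s : Fin r, (0:ℝ) < 1 + x ⬝ᵥ (C s).mulVec x := fun s => by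
    have := hQ0 s; linarith
  have hden_pos : (0:ℝ) < ∏ s, (1 + x ⬝ᵥ (C s).mulVec x) :=
    Finset.prod_pos fun s _ => hfac_pos s
  have hxi : ∀ i, x i ^ 2 ≤ x ⬝ᵥ x := by
    intro i
    have := Finset.single_le_sum (f := fun j => x j * x j)
      (fun j _ => mul_self_nonneg _) (Finset.mem_univ i)
    simpa [pow_two, dotProduct] using this
  have hsq : (∏ i, x i ^ n i) ^ 2 ≤ ((x ⬝ᵥ x) ^ r) ^ 2 := by
    rw [← Finset.prod_pow]
    calc ∏ i, (x i ^ n i) ^ 2 = ∏ i, (x i ^ 2) ^ n i := by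
          simp_rw [← pow_mul, mul_comm]
      _ ≤ ∏ i, (x ⬝ᵥ x) ^ n i := Finset.prod_le_prod
            (fun i _ => pow_nonneg (sq_nonneg _) _)
            (fun i _ => pow_le_pow_left₀ (sq_nonneg _) (hxi i) _)
      _ = (x ⬝ᵥ x) ^ (∑ i, n i) := by rw [Finset.prod_pow_eq_pow_sum]
      _ = ((x ⬝ᵥ x) ^ r) ^ 2 := by rw [hn, ← pow_mul, mul_comm]
  have hnum : |∏ i, x i ^ n i| ≤ (x ⬝ᵥ x) ^ r := by
    have h0 : (0:ℝ) ≤ (x ⬝ᵥ x) ^ r := pow_nonneg hxx _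
    nlinarith [abs_nonneg (∏ i, x i ^ n i), sq_abs (∏ i, x i ^ n i)]
  rw [abs_div, abs_of_pos hden_pos]
  calc |∏ i, x i ^ n i| / ∏ s, (1 + x ⬝ᵥ (C s).mulVec x)
      ≤ (x ⬝ᵥ x) ^ r / ∏ s, (1 + x ⬝ᵥ (C s).mulVec x) :=
        (div_le_div_iff_of_pos_right hden_pos).2 hnum
    _ = ∏ s : Fin r, ((x ⬝ᵥ x) / (1 + x ⬝ᵥ (C s).mulVec x)) := by
        rw [Finset.prod_div_distrib, Finset.prod_const, Finset.card_univ, Fintype.card_fin]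
    _ ≤ ∏ s : Fin r, (1 / δ) := by
        refine Finset.prod_le_prod (fun s _ => div_nonneg hxx (hfac_pos s).le) (fun s _ => ?_)
        rw [div_le_div_iff₀ (hfac_pos s) hδ0]
        have := hQ s
        nlinarith
    _ = (1 / δ) ^ r := by rw [Finset.prod_const, Finset.card_univ, Fintype.card_fin]


theorem stmt_2 (d r : ℕ) (hd : 0 < d) (hr : 0 < r) (δ : ℝ) (hδ0 : 0 < δ) (hδ1 : δ < 1)
    (n : Fin d → ℕ) (hn : ∑ i, n i = 2 * r)
    (C : Fin r → Matrix (Fin d) (Fin d) ℝ) (hC : ∀ s, (C s).PosDef)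
    (hCn : ∀ s, ‖Matrix.toEuclideanCLM (𝕜 := ℝ) (C s)‖ < 1 / δ)
    (hCin : ∀ s, ‖Matrix.toEuclideanCLM (𝕜 := ℝ) (C s)⁻¹‖ < 1 / δ)
    (f : EuclideanSpace ℝ (Fin d) → ℝ)
    (hf : ∀ x, f x = (∏ i, (x : Fin d → ℝ) i ^ n i) /
      ∏ s, (1 + (x : Fin d → ℝ) ⬝ᵥ (C s).mulVec (x : Fin d → ℝ))) :
    (δ / d) ^ r ≤ ⨆ x : EuclideanSpace ℝ (Fin d), |f x| := by
  have hd' : (0:ℝ) < d := by exact_mod_cast hd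
  -- boundedness
  have hbdd : BddAbove (Set.range fun x : EuclideanSpace ℝ (Fin d) => |f x|) := by
    refine ⟨(1/δ)^r, ?_⟩
    rintro y ⟨x, rfl⟩
    show |f x| ≤ (1/δ)^r
    rw [hf x]
    exact f_ub hδ0 n hn C hC (fun s => (hCin s).le) (x : Fin d → ℝ)
  -- the one-vector and quadratic values
  set v : Fin d → ℝ := fun _ => (1:ℝ) with hv
  set q : Fin r → ℝ := fun s => v ⬝ᵥ (C s).mulVec v with hqdef
  have hvv : v ⬝ᵥ v = (d:ℝ) := by simp [hv, dotProduct]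
  have hq_lt : ∀ s, q s < (d:ℝ) / δ := by
    intro s
    have h1 : q s ≤ ‖toEuclideanCLM (𝕜 := ℝ) (C s)‖ * (d:ℝ) := by
      have := quad_le (C s) v; rwa [hvv] at this
    have h2 : ‖toEuclideanCLM (𝕜 := ℝ) (C s)‖ * (d:ℝ) < (1/δ) * d :=
      mul_lt_mul_of_pos_right (hCn s) hd'
    calc q s ≤ _ := h1
      _ < (1/δ) * d := h2
      _ = (d:ℝ)/δ := by ring
  have hq_pos : ∀ s, 0 ≤ q s := fun s => by
    have := (hC s).posSemidef.dotProduct_mulVec_nonneg v; simpa [hqdef] using this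
  -- the infimum of gaps
  have hne : (Finset.univ : Finset (Fin r)).Nonempty := ⟨⟨0, hr⟩, Finset.mem_univ _⟩
  set m : ℝ := Finset.univ.inf' hne (fun s => (d:ℝ) - δ * q s) with hm
  have hm_pos : 0 < m := by
    rw [hm, Finset.lt_inf'_iff]
    intro s _
    have h2 : q s * δ < d := (lt_div_iff₀ hδ0).1 (hq_lt s)
    nlinarith
  have hm_le : ∀ s, m ≤ (d:ℝ) - δ * q s := fun s => Finset.inf'_le _ (Finset.mem_univ s)
  set t2 : ℝ := δ / m with ht2def
  have ht2 : 0 < t2 := div_pos hδ0 hm_pos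
  -- witness point
  set x0 : EuclideanSpace ℝ (Fin d) := (WithLp.equiv 2 (Fin d → ℝ)).symm (fun _ => Real.sqrt t2)
    with hx0
  have hx0c : (x0 : Fin d → ℝ) = fun _ => Real.sqrt t2 := rfl
  have hnum : (∏ i, (x0 : Fin d → ℝ) i ^ n i) = t2 ^ r := by
    rw [hx0c]
    simp only
    rw [Finset.prod_pow_eq_pow_sum, hn, pow_mul, Real.sq_sqrt ht2.le]
  have hquad : ∀ s, (x0 : Fin d → ℝ) ⬝ᵥ (C s).mulVec (x0 : Fin d → ℝ) = t2 * q s := by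
    intro s
    have hx0s : (x0 : Fin d → ℝ) = Real.sqrt t2 • v := by
      funext i; simp [hx0c, hv]
    rw [hx0s, Matrix.mulVec_smul, smul_dotProduct, dotProduct_smul,
      smul_eq_mul, smul_eq_mul, ← mul_assoc, Real.mul_self_sqrt ht2.le, hqdef]
  have hfx0 : f x0 = ∏ s : Fin r, (t2 / (1 + t2 * q s)) := by
    rw [hf x0, hnum]
    simp_rw [hquad]
    rw [Finset.prod_div_distrib, Finset.prod_const, Finset.card_univ, Fintype.card_fin]
  have hfac : ∀ s : Fin r, δ / d ≤ t2 / (1 + t2 * q s) := by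
    intro s
    have hden : (0:ℝ) < 1 + t2 * q s := by nlinarith [hq_pos s, ht2]
    rw [div_le_div_iff₀ hd' hden]
    have key : δ ≤ t2 * ((d:ℝ) - δ * q s) := by
      calc δ = t2 * m := by rw [ht2def]; field_simp
        _ ≤ t2 * ((d:ℝ) - δ * q s) := mul_le_mul_of_nonneg_left (hm_le s) ht2.le
    nlinarith
  have hlow : (δ / d) ^ r ≤ f x0 := by
    rw [hfx0]
    calc (δ/d)^r = ∏ _s : Fin r, (δ/d) := by
          rw [Finset.prod_const, Finset.card_univ, Fintype.card_fin]
      _ ≤ ∏ s : Fin r, (t2 / (1 + t2 * q s)) :=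
          Finset.prod_le_prod (fun s _ => div_nonneg hδ0.le hd'.le) (fun s _ => hfac s)
  calc (δ / d) ^ r ≤ f x0 := hlow
    _ ≤ |f x0| := le_abs_self _
    _ ≤ ⨆ x : EuclideanSpace ℝ (Fin d), |f x| := le_ciSup hbdd x0
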